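/- For any maxbiclique (I0, J0) of the irreducibles-comparability relation of a finite lattice, setting c to be the join of J0, the pair consisting of all meet-irreducibles above c and all join-irreducibles below c equals (I0, J0). -/
import Mathlib


/-- A pair of sets of meet-irreducibles and join-irreducibles forming an induced
biclique of the comparability relation `(i, j) ∈ R ↔ j ≤ i`. -/
def IsIrrBiclique {L : Type*} [Lattice L] (p : Set L × Set L) : Prop :=
  (∀ i ∈ p.1, InfIrred i) ∧ (∀ j ∈ p.2, SupIrred j) ∧ ∀ i ∈ p.1, ∀ j ∈ p.2, j ≤ i

/-- For any maxbiclique `(A, B)` of the irreducibles-comparability relation of a finite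
lattice, letting `c` be the join of `B`, the meet-irreducibles above `c` are exactly `A`
and the join-irreducibles below `c` are exactly `B`. -/
theorem stmt5 {L : Type*} [Fintype L] [Lattice L] [BoundedOrder L]
    (A B : Set L) (hbc : IsIrrBiclique (A, B))
    (hmax : ∀ q : Set L × Set L, IsIrrBiclique q → A ⊆ q.1 → B ⊆ q.2 → (A, B) = q)
    (c : L) (hc : c = (Set.toFinite B).toFinset.sup id) :
    {i | InfIrred i ∧ c ≤ i} = A ∧ {j | SupIrred j ∧ j ≤ c} = B := by
  obtain ⟨hA, hB, hAB⟩ := hbc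
  have hjc : ∀ j ∈ B, j ≤ c := by
    intro j hj
    rw [hc]
    exact Finset.le_sup (f := id) ((Set.toFinite B).mem_toFinset.mpr hj)
  have hci : ∀ i ∈ A, c ≤ i := by
    intro i hi
    rw [hc]
    exact Finset.sup_le fun j hj => hAB i hi j ((Set.toFinite B).mem_toFinset.mp hj)
  have hq : IsIrrBiclique ({i | InfIrred i ∧ c ≤ i}, {j | SupIrred j ∧ j ≤ c}) :=
    ⟨fun i hi => hi.1, fun j hj => hj.1, fun i hi j hj => hj.2.trans hi.2⟩
  have := hmax _ hq (fun i hi => ⟨hA i hi, hci i hi⟩) (fun j hj => ⟨hB j hj, hjc j hj⟩)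
  exact ⟨(congrArg Prod.fst this).symm, (congrArg Prod.snd this).symm⟩
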